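/- For a strict ∞-category C, let C_k be the sub-∞-category of arrows of dimension at most k. Then the natural map ℤ(C_k) → ℤC induced by inclusion is injective with image exactly (ℤC)_k, the subgroup of k-arrows of the ∞-group ℤC (i.e. the image of π_k^+). -/

import Mathlib

/-- Street's one-sorted axioms for a strict ∞-category. -/
def IsOmegaCat {C : Type*} (π : Bool → ℕ → C → C) (comp : ℕ → C → C → C) : Prop :=
  (∀ x, ∃ n, π true n x = x ∧ π false n x = x) ∧
  (∀ (ε δ : Bool) (n m : ℕ) (x : C),
      π ε n (π δ m x) = if n < m then π ε n x else π δ m x) ∧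
  (∀ (n : ℕ) (x : C), comp n (π false n x) x = x ∧ comp n x (π true n x) = x) ∧
  (∀ (n : ℕ) (x y : C), π true n x = π false n y →
      π false n (comp n x y) = π false n x ∧
      π true n (comp n x y) = π true n y ∧
      ∀ (k : ℕ), n < k → ∀ ε, π ε k (comp n x y) = comp n (π ε k x) (π ε k y)) ∧
  (∀ (n : ℕ) (x y z : C), π true n x = π false n y → π true n y = π false n z →
      comp n x (comp n y z) = comp n (comp n x y) z) ∧
  (∀ (k n : ℕ) (x y z w : C), k < n →
      π true n x = π false n y → π true n z = π false n w →
      π true k (comp n x y) = π false k (comp n z w) →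
      comp k (comp n x y) (comp n z w) = comp n (comp k x z) (comp k y w))

/-- `(Z, πZ, δ)` is the free strict ∞-group on the strict ∞-category `(C, π, comp)`. -/
def IsFreeInfGroup {C : Type*} (π : Bool → ℕ → C → C) (comp : ℕ → C → C → C)
    {Z : Type*} [AddCommGroup Z] (πZ : Bool → ℕ → Z →+ Z) (δ : C → Z) : Prop :=
  (∀ (ε δ' : Bool) (n m : ℕ) (z : Z),
      πZ ε n (πZ δ' m z) = if n < m then πZ ε n z else πZ δ' m z) ∧
  (∀ z : Z, ∃ n, πZ true n z = z) ∧
  (∀ (ε : Bool) (n : ℕ) (f : C), δ (π ε n f) = πZ ε n (δ f)) ∧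
  (∀ (k : ℕ) (x y : C), π true k x = π false k y →
      δ (comp k x y) = δ x + δ y - δ (π true k x)) ∧
  (∀ (H : Type) [AddCommGroup H] (πH : Bool → ℕ → H →+ H),
    (∀ (ε δ' : Bool) (n m : ℕ) (z : H),
        πH ε n (πH δ' m z) = if n < m then πH ε n z else πH δ' m z) →
    (∀ z : H, ∃ n, πH true n z = z) →
    ∀ φ : C → H,
      (∀ (ε : Bool) (n : ℕ) (f : C), φ (π ε n f) = πH ε n (φ f)) →
      (∀ (k : ℕ) (x y : C), π true k x = π false k y →
          φ (comp k x y) = φ x + φ y - πH true k (φ x)) →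
      ∃! ψ : Z →+ H, (∀ c : C, ψ (δ c) = φ c) ∧
        ∀ (ε : Bool) (n : ℕ) (z : Z), ψ (πZ ε n z) = πH ε n (ψ z))

namespace FIGAux

open FreeAbelianGroup

variable {C : Type} (π : Bool → ℕ → C → C) (comp : ℕ → C → C → C)

def rel : AddSubgroup (FreeAbelianGroup C) :=
  AddSubgroup.closure {r | ∃ n x y, π true n x = π false n y ∧
    r = of (comp n x y) - of x - of y + of (π true n x)}

abbrev Model := FreeAbelianGroup C ⧸ rel π comp

def d (c : C) : Model π comp := QuotientAddGroup.mk' _ (of c)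

def descend {H : Type*} [AddCommGroup H] (φ : C → H)
    (h : ∀ n x y, π true n x = π false n y →
      φ (comp n x y) = φ x + φ y - φ (π true n x)) :
    Model π comp →+ H :=
  QuotientAddGroup.lift _ (lift φ) (by
    refine (AddSubgroup.closure_le _).mpr ?_
    rintro r ⟨n, x, y, hxy, rfl⟩
    simp only [SetLike.mem_coe, AddMonoidHom.mem_ker, map_add, map_sub, lift_apply_of]
    rw [h n x y hxy]; abel)

@[simp] theorem descend_d {H : Type*} [AddCommGroup H] (φ : C → H) (h) (c : C) :
    descend π comp φ h (d π comp c) = φ c := by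
  simp [descend, d, QuotientAddGroup.lift_mk']
  exact lift_apply_of (f := φ) c

theorem hom_ext {H : Type*} [AddCommGroup H] (f g : Model π comp →+ H)
    (h : ∀ c, f (d π comp c) = g (d π comp c)) : f = g := by
  have h2 : f.comp (QuotientAddGroup.mk' (rel π comp))
      = g.comp (QuotientAddGroup.mk' (rel π comp)) :=
    FreeAbelianGroup.lift_ext _ _ h
  refine AddMonoidHom.ext fun z => ?_
  obtain ⟨a, rfl⟩ := QuotientAddGroup.mk'_surjective (rel π comp) z
  exact DFunLike.congr_fun h2 a

theorem d_comp {n : ℕ} {x y : C} (h : π true n x = π false n y) :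
    d π comp (comp n x y) = d π comp x + d π comp y - d π comp (π true n x) := by
  have hm : (of (comp n x y) - of x - of y + of (π true n x) : FreeAbelianGroup C)
      ∈ rel π comp := AddSubgroup.subset_closure ⟨n, x, y, h, rfl⟩
  have h0 : QuotientAddGroup.mk' (rel π comp)
      (of (comp n x y) - of x - of y + of (π true n x)) = 0 :=
    (QuotientAddGroup.eq_zero_iff _).mpr hm
  rw [← sub_eq_zero]
  calc d π comp (comp n x y) - (d π comp x + d π comp y - d π comp (π true n x))
      = QuotientAddGroup.mk' (rel π comp)
        (of (comp n x y) - of x - of y + of (π true n x)) := by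
        simp only [map_add, map_sub, d]; abel
    _ = 0 := h0

theorem generates : AddSubgroup.closure (Set.range (d π comp)) = ⊤ := by
  rw [eq_top_iff]
  rintro z -
  obtain ⟨a, rfl⟩ := QuotientAddGroup.mk'_surjective (rel π comp) z
  have hof : ∀ x : C, QuotientAddGroup.mk' (rel π comp) (of x)
      ∈ AddSubgroup.closure (Set.range (d π comp)) :=
    fun x => AddSubgroup.subset_closure ⟨x, rfl⟩
  induction a using FreeAbelianGroup.induction_on with
  | zero => simpa using AddSubgroup.zero_mem _
  | of x => exact hof x
  | neg x _ => rw [map_neg]; exact AddSubgroup.neg_mem _ (hof x)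
  | add x y hx hy => rw [map_add]; exact AddSubgroup.add_mem _ hx hy

theorem subgroup_eq_top (S : AddSubgroup (Model π comp)) (h : ∀ c, d π comp c ∈ S) :
    S = ⊤ := by
  rw [eq_top_iff, ← generates π comp]
  exact (AddSubgroup.closure_le _).mpr (by rintro _ ⟨c, rfl⟩; exact h c)


theorem pi_lt_comp (hcat : IsOmegaCat π comp) {n : ℕ} {x y : C} (h : π true n x = π false n y) {N : ℕ}
    (hN : N < n) (ε : Bool) : π ε N (comp n x y) = π ε N x := by
  have h1 : π ε N (comp n x y) = π ε N (π false n (comp n x y)) := by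
    rw [hcat.2.1 ε false N n, if_pos hN]
  rw [h1, (hcat.2.2.2.1 n x y h).1, hcat.2.1, if_pos hN]

theorem pi_lt_right (hcat : IsOmegaCat π comp) {n : ℕ} {x y : C} (h : π true n x = π false n y) {N : ℕ}
    (hN : N < n) (ε : Bool) : π ε N y = π ε N x := by
  have h1 : π ε N y = π ε N (π false n y) := by rw [hcat.2.1, if_pos hN]
  rw [h1, ← h, hcat.2.1, if_pos hN]

def pMap (hcat : IsOmegaCat π comp) (ε : Bool) (n : ℕ) : Model π comp →+ Model π comp :=
  descend π comp (fun c => d π comp (π ε n c)) (by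
    intro m x y hxy
    show d π comp (π ε n (comp m x y))
      = d π comp (π ε n x) + d π comp (π ε n y) - d π comp (π ε n (π true m x))
    rcases lt_trichotomy n m with hnm | rfl | hmn
    · rw [pi_lt_comp π comp hcat hxy hnm, pi_lt_right π comp hcat hxy hnm,
        hcat.2.1, if_pos hnm]
      abel
    · cases ε with
      | true =>
        rw [(hcat.2.2.2.1 n x y hxy).2.1, hcat.2.1, if_neg (lt_irrefl n)]
        abel
      | false =>
        rw [(hcat.2.2.2.1 n x y hxy).1, hcat.2.1, if_neg (lt_irrefl n), hxy]
        abel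
    · have hb : π true m (π ε n x) = π false m (π ε n y) := by
        rw [hcat.2.1, if_pos hmn, hcat.2.1, if_pos hmn, hxy]
      rw [(hcat.2.2.2.1 m x y hxy).2.2 n hmn ε, d_comp π comp hb,
        hcat.2.1 true ε m n x, if_pos hmn, hcat.2.1 ε true n m x,
        if_neg (not_lt.mpr hmn.le)])

@[simp] theorem pMap_d (hcat : IsOmegaCat π comp) (ε : Bool) (n : ℕ) (c : C) :
    pMap π comp hcat ε n (d π comp c) = d π comp (π ε n c) :=
  descend_d π comp _ _ c

theorem pMap_pMap (hcat : IsOmegaCat π comp) (ε δ' : Bool) (n m : ℕ) (z : Model π comp) :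
    pMap π comp hcat ε n (pMap π comp hcat δ' m z)
      = if n < m then pMap π comp hcat ε n z else pMap π comp hcat δ' m z := by
  by_cases hnm : n < m
  · rw [if_pos hnm]
    have h := hom_ext π comp ((pMap π comp hcat ε n).comp (pMap π comp hcat δ' m))
      (pMap π comp hcat ε n) (fun c => by
        simp only [AddMonoidHom.comp_apply, pMap_d, hcat.2.1 ε δ' n m c, if_pos hnm])
    exact DFunLike.congr_fun h z
  · rw [if_neg hnm]
    have h := hom_ext π comp ((pMap π comp hcat ε n).comp (pMap π comp hcat δ' m))
      (pMap π comp hcat δ' m) (fun c => by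
        simp only [AddMonoidHom.comp_apply, pMap_d, hcat.2.1 ε δ' n m c, if_neg hnm])
    exact DFunLike.congr_fun h z

theorem pMap_trunc (hcat : IsOmegaCat π comp) (z : Model π comp) : ∃ n, pMap π comp hcat true n z = z := by
  let S : AddSubgroup (Model π comp) :=
    { carrier := {z | ∃ n, ∀ m, n ≤ m → pMap π comp hcat true m z = z}
      zero_mem' := ⟨0, fun m _ => map_zero _⟩
      add_mem' := by
        rintro a b ⟨n₁, h₁⟩ ⟨n₂, h₂⟩
        exact ⟨max n₁ n₂, fun m hm => by
          rw [map_add, h₁ m (le_trans (le_max_left _ _) hm),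
            h₂ m (le_trans (le_max_right _ _) hm)]⟩
      neg_mem' := by
        rintro a ⟨n, hn⟩
        exact ⟨n, fun m hm => by rw [map_neg, hn m hm]⟩ }
  have hS : S = ⊤ := subgroup_eq_top π comp S (fun c => by
    obtain ⟨n, hn, -⟩ := hcat.1 c
    refine ⟨n, fun m hm => ?_⟩
    have h1 : π true m c = π true m (π true n c) := by rw [hn]
    rw [pMap_d, h1, hcat.2.1, if_neg (not_lt.mpr hm), hn])
  have hz : z ∈ S := hS ▸ AddSubgroup.mem_top z
  obtain ⟨n, hn⟩ := hz
  exact ⟨n, hn n le_rfl⟩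

theorem descend_pMap (hcat : IsOmegaCat π comp) {H : Type*} [AddCommGroup H] (πH : Bool → ℕ → H →+ H) (φ : C → H)
    (hφ : ∀ ε n f, φ (π ε n f) = πH ε n (φ f)) (hc) (ε : Bool) (n : ℕ)
    (z : Model π comp) :
    descend π comp φ hc (pMap π comp hcat ε n z) = πH ε n (descend π comp φ hc z) := by
  have h := hom_ext π comp ((descend π comp φ hc).comp (pMap π comp hcat ε n))
    ((πH ε n).comp (descend π comp φ hc)) (fun c => by
      simp only [AddMonoidHom.comp_apply, pMap_d, descend_d, hφ])
  exact DFunLike.congr_fun h z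

end FIGAux


open FIGAux in
/-- Let `C_k → C` be the inclusion of the sub-∞-category of arrows of dimension at
most `k`.  Then the induced morphism `ℤ(C_k) → ℤC` of free strict ∞-groups is
injective, with image exactly `(ℤC)_k`, the subgroup of `k`-arrows of `ℤC`
(the image of `π_k^+`). -/
theorem free_inf_group_of_truncation
    {C Ck : Type} (π : Bool → ℕ → C → C) (comp : ℕ → C → C → C)
    (hcat : IsOmegaCat π comp)
    (πk : Bool → ℕ → Ck → Ck) (compk : ℕ → Ck → Ck → Ck)
    (hcatk : IsOmegaCat πk compk)
    (k : ℕ) (j : Ck → C)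
    (hjinj : Function.Injective j)
    (hjπ : ∀ (ε : Bool) (n : ℕ) (x : Ck), j (πk ε n x) = π ε n (j x))
    (hjcomp : ∀ (m : ℕ) (x y : Ck), πk true m x = πk false m y →
      j (compk m x y) = comp m (j x) (j y))
    (hjim : ∀ y : C, π true k y = y ↔ ∃ x : Ck, j x = y)
    {Z : Type} [AddCommGroup Z] (πZ : Bool → ℕ → Z →+ Z) (δ : C → Z)
    (hfree : IsFreeInfGroup π comp πZ δ)
    {Zk : Type} [AddCommGroup Zk] (πZk : Bool → ℕ → Zk →+ Zk) (δk : Ck → Zk)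
    (hfreek : IsFreeInfGroup πk compk πZk δk)
    (ι : Zk →+ Z)
    (hι1 : ∀ x : Ck, ι (δk x) = δ (j x))
    (hι2 : ∀ (ε : Bool) (n : ℕ) (z : Zk), ι (πZk ε n z) = πZ ε n (ι z)) :
    Function.Injective ι ∧ ∀ z : Z, (∃ w : Zk, ι w = z) ↔ πZ true k z = z := by
  classical
  obtain ⟨hZππ, hZdim, hZπδ, hZcomp, hZuniv⟩ := hfree
  obtain ⟨hKππ, hKdim, hKπδ, hKcomp, hKuniv⟩ := hfreek
  -- the truncation map g : C → Ck with j (g c) = π true k c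
  have hidem : ∀ c : C, π true k (π true k c) = π true k c := fun c => by
    rw [hcat.2.1, if_neg (lt_irrefl k)]
  have hex : ∀ c : C, ∃ x : Ck, j x = π true k c := fun c => (hjim _).mp (hidem c)
  let g : C → Ck := fun c => (hex c).choose
  have hg : ∀ c, j (g c) = π true k c := fun c => (hex c).choose_spec
  have hginj : ∀ {a b : C}, π true k a = π true k b → g a = g b := by
    intro a b h; apply hjinj; rw [hg, hg, h]
  have hjfix : ∀ x : Ck, π true k (j x) = j x := fun x => (hjim (j x)).mpr ⟨x, rfl⟩
  -- θ : Model → Z and its properties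
  let θ : Model π comp →+ Z := descend π comp δ hZcomp
  have hθd : ∀ c, θ (d π comp c) = δ c := fun c => descend_d π comp δ hZcomp c
  have hθπ : ∀ ε n z, θ (pMap π comp hcat ε n z) = πZ ε n (θ z) :=
    fun ε n z => descend_pMap π comp hcat πZ δ hZπδ hZcomp ε n z
  -- ψ : Z → Model from the universal property
  obtain ⟨ψ, ⟨hψd, hψπ⟩, -⟩ := hZuniv (Model π comp) (pMap π comp hcat)
    (pMap_pMap π comp hcat) (pMap_trunc π comp hcat) (d π comp)
    (fun ε n f => (pMap_d π comp hcat ε n f).symm)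
    (fun m x y h => by rw [d_comp π comp h, pMap_d])
  have hθψ : ∀ z : Z, θ (ψ z) = z := by
    obtain ⟨ψ₀, -, huniq₀⟩ := hZuniv Z πZ hZππ hZdim δ hZπδ
      (fun m x y h => by rw [hZcomp m x y h, hZπδ])
    have h1 := huniq₀ (θ.comp ψ) ⟨fun c => by
        rw [AddMonoidHom.comp_apply, hψd, hθd],
      fun ε n z => by
        rw [AddMonoidHom.comp_apply, hψπ, hθπ, AddMonoidHom.comp_apply]⟩
    have h2 := huniq₀ (AddMonoidHom.id Z) ⟨fun c => rfl, fun ε n z => rfl⟩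
    intro z
    calc θ (ψ z) = (θ.comp ψ) z := rfl
      _ = ψ₀ z := by rw [h1]
      _ = z := by rw [← h2]; rfl
  have hψθ : ∀ w, ψ (θ w) = w := by
    have h := hom_ext π comp (ψ.comp θ) (AddMonoidHom.id _) (fun c => by
      rw [AddMonoidHom.comp_apply, hθd, hψd, AddMonoidHom.id_apply])
    exact fun w => DFunLike.congr_fun h w
  have Zext : ∀ (H : Type) [AddCommGroup H] (f f' : Z →+ H),
      (∀ c, f (δ c) = f' (δ c)) → ∀ z, f z = f' z := by
    intro H _ f f' hff z
    have h := hom_ext π comp (f.comp θ) (f'.comp θ) (fun c => by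
      simp only [AddMonoidHom.comp_apply, hθd]; exact hff c)
    have h' := DFunLike.congr_fun h (ψ z)
    simp only [AddMonoidHom.comp_apply, hθψ z] at h'
    exact h'
  -- k-side : θk, ψk
  let θk : Model πk compk →+ Zk := descend πk compk δk hKcomp
  have hθkd : ∀ x, θk (d πk compk x) = δk x := fun x => descend_d πk compk δk hKcomp x
  have hθkπ : ∀ ε n z, θk (pMap πk compk hcatk ε n z) = πZk ε n (θk z) :=
    fun ε n z => descend_pMap πk compk hcatk πZk δk hKπδ hKcomp ε n z
  obtain ⟨ψk, ⟨hψkd, hψkπ⟩, -⟩ := hKuniv (Model πk compk) (pMap πk compk hcatk)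
    (pMap_pMap πk compk hcatk) (pMap_trunc πk compk hcatk) (d πk compk)
    (fun ε n f => (pMap_d πk compk hcatk ε n f).symm)
    (fun m x y h => by rw [d_comp πk compk h, pMap_d])
  have hθkψk : ∀ z : Zk, θk (ψk z) = z := by
    obtain ⟨ψ₀, -, huniq₀⟩ := hKuniv Zk πZk hKππ hKdim δk hKπδ
      (fun m x y h => by rw [hKcomp m x y h, hKπδ])
    have h1 := huniq₀ (θk.comp ψk) ⟨fun c => by
        rw [AddMonoidHom.comp_apply, hψkd, hθkd],
      fun ε n z => by
        rw [AddMonoidHom.comp_apply, hψkπ, hθkπ, AddMonoidHom.comp_apply]⟩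
    have h2 := huniq₀ (AddMonoidHom.id Zk) ⟨fun c => rfl, fun ε n z => rfl⟩
    intro z
    calc θk (ψk z) = (θk.comp ψk) z := rfl
      _ = ψ₀ z := by rw [h1]
      _ = z := by rw [← h2]; rfl
  have Kext : ∀ (H : Type) [AddCommGroup H] (f f' : Zk →+ H),
      (∀ x, f (δk x) = f' (δk x)) → ∀ w, f w = f' w := by
    intro H _ f f' hff w
    have h := hom_ext πk compk (f.comp θk) (f'.comp θk) (fun x => by
      simp only [AddMonoidHom.comp_apply, hθkd]; exact hff x)
    have h' := DFunLike.congr_fun h (ψk w)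
    simp only [AddMonoidHom.comp_apply, hθkψk w] at h'
    exact h'
  -- ι₀ : Modelk → Model
  have hjbd : ∀ {m : ℕ} {x y : Ck}, πk true m x = πk false m y →
      π true m (j x) = π false m (j y) := by
    intro m x y h; rw [← hjπ, ← hjπ, h]
  let ι₀ : Model πk compk →+ Model π comp :=
    descend πk compk (fun x => d π comp (j x)) (by
      intro m x y h
      show d π comp (j (compk m x y))
        = d π comp (j x) + d π comp (j y) - d π comp (j (πk true m x))
      rw [hjcomp m x y h, hjπ]
      exact d_comp π comp (hjbd h))
  have hι₀d : ∀ x, ι₀ (d πk compk x) = d π comp (j x) := fun x => descend_d _ _ _ _ x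
  -- P : Model → Modelk
  have hPcomp : ∀ n x y, π true n x = π false n y →
      d πk compk (g (comp n x y))
        = d πk compk (g x) + d πk compk (g y) - d πk compk (g (π true n x)) := by
    intro n x y hxy
    rcases lt_trichotomy n k with hnk | rfl | hkn
    · have hbk : πk true n (g x) = πk false n (g y) := hjinj (by
        rw [hjπ, hjπ, hg, hg, hcat.2.1 true true n k x, if_pos hnk,
          hcat.2.1 false true n k y, if_pos hnk]
        exact hxy)
      have h1 : g (comp n x y) = compk n (g x) (g y) := hjinj (by
        rw [hg, (hcat.2.2.2.1 n x y hxy).2.2 k hnk true, hjcomp n _ _ hbk, hg, hg])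
      have h2 : g (π true n x) = πk true n (g x) := hjinj (by
        rw [hg, hjπ, hg, hcat.2.1 true true k n x, if_neg (not_lt.mpr hnk.le),
          hcat.2.1 true true n k x, if_pos hnk])
      rw [h1, h2]
      exact d_comp πk compk hbk
    · have h1 : g (comp n x y) = g y := hginj (hcat.2.2.2.1 n x y hxy).2.1
      have h2 : g (π true n x) = g x := hginj (hidem x)
      rw [h1, h2]; abel
    · have h1 : g (comp n x y) = g x := hginj (pi_lt_comp π comp hcat hxy hkn true)
      have h2 : g y = g x := hginj (pi_lt_right π comp hcat hxy hkn true)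
      have h3 : g (π true n x) = g x := hginj (by
        rw [hcat.2.1 true true k n x, if_pos hkn])
      rw [h1, h2, h3]; abel
  let P : Model π comp →+ Model πk compk :=
    descend π comp (fun c => d πk compk (g c)) hPcomp
  have hPd : ∀ c, P (d π comp c) = d πk compk (g c) := fun c => descend_d _ _ _ _ c
  have hPι₀ : ∀ w, P (ι₀ w) = w := by
    have h := hom_ext πk compk (P.comp ι₀) (AddMonoidHom.id _) (fun x => by
      rw [AddMonoidHom.comp_apply, hι₀d, hPd, AddMonoidHom.id_apply]
      congr 1
      exact hjinj (by rw [hg, hjfix]))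
    exact fun w => DFunLike.congr_fun h w
  -- compatibility : ψ ∘ ι = ι₀ ∘ ψk
  have hcompat : ∀ w : Zk, ψ (ι w) = ι₀ (ψk w) := by
    intro w
    exact Kext (Model π comp) (ψ.comp ι) (ι₀.comp ψk) (fun x => by
      rw [AddMonoidHom.comp_apply, hι1, hψd, AddMonoidHom.comp_apply, hψkd, hι₀d]) w
  constructor
  · intro w₁ w₂ hww
    have h1 : ι₀ (ψk w₁) = ι₀ (ψk w₂) := by rw [← hcompat, ← hcompat, hww]
    have h2 : ψk w₁ = ψk w₂ := by
      have h3 := congrArg P h1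
      rwa [hPι₀, hPι₀] at h3
    have h4 := congrArg θk h2
    rwa [hθkψk, hθkψk] at h4
  · intro z
    constructor
    · rintro ⟨w, rfl⟩
      exact Kext Z ((πZ true k).comp ι) ι (fun x => by
        rw [AddMonoidHom.comp_apply, hι1, ← hZπδ, hjfix]) w
    · intro hz
      have hall : ∀ z' : Z, πZ true k z' ∈ AddMonoidHom.range ι := by
        intro z'
        have h0 := Zext (Z ⧸ AddMonoidHom.range ι)
          ((QuotientAddGroup.mk' (AddMonoidHom.range ι)).comp (πZ true k)) 0
          (fun c => by
            rw [AddMonoidHom.comp_apply, ← hZπδ, ← hg, ← hι1, AddMonoidHom.zero_apply]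
            exact (QuotientAddGroup.eq_zero_iff _).mpr ⟨δk (g c), rfl⟩) z'
        rw [AddMonoidHom.comp_apply, AddMonoidHom.zero_apply] at h0
        exact (QuotientAddGroup.eq_zero_iff _).mp h0
      obtain ⟨w, hw⟩ := hall z
      exact ⟨w, by rwa [hz] at hw⟩
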